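/- For all α > 0 and all integers q ≥ 1, the infimum of ∫_ℝ (q|φ'|² − αq²|φ|⁴) dx over real-valued φ ∈ H¹(ℝ) with ‖φ‖_{L²} = 1 equals −α²q³/12. -/

import Mathlib

open MeasureTheory Real

open Filter Set

/-- Whole-line FTC with integrable derivative. -/
lemma ftc_line {g g' : ℝ → ℝ} {m M : ℝ} (hderiv : ∀ x, HasDerivAt g (g' x) x)
    (hint : Integrable g') (hbot : Tendsto g atBot (nhds m))
    (htop : Tendsto g atTop (nhds M)) : ∫ x, g' x = M - m := by
  have h1 : ∫ x in Iic (0:ℝ), g' x = g 0 - m :=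
    integral_Iic_of_hasDerivAt_of_tendsto' (fun x _ => hderiv x) hint.integrableOn hbot
  have h2 : ∫ x in Ioi (0:ℝ), g' x = M - g 0 :=
    integral_Ioi_of_hasDerivAt_of_tendsto' (fun x _ => hderiv x) hint.integrableOn htop
  have := intervalIntegral.integral_Iic_add_Ioi (b := (0:ℝ)) hint.integrableOn hint.integrableOn
  rw [← this, h1, h2]; ring

/-- Nonnegative derivative with limits at both ends is integrable on the line. -/
lemma integrable_line_of_nonneg {g g' : ℝ → ℝ} {m M : ℝ}
    (hderiv : ∀ x, HasDerivAt g (g' x) x) (hpos : ∀ x, 0 ≤ g' x)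
    (hbot : Tendsto g atBot (nhds m)) (htop : Tendsto g atTop (nhds M)) :
    Integrable g' := by
  have h2 : IntegrableOn g' (Ioi (0:ℝ)) :=
    integrableOn_Ioi_deriv_of_nonneg' (fun x _ => hderiv x) (fun x _ => hpos x) htop
  have h1 : IntegrableOn g' (Iic (0:ℝ)) := by
    have hd : ∀ x, HasDerivAt (fun y => -g (-y)) (g' (-x)) x := by
      intro x
      exact (((hderiv (-x)).comp x (hasDerivAt_neg x))).neg.congr_deriv (by ring)
    have hl : Tendsto (fun y => -g (-y)) atTop (nhds (-m)) :=
      (hbot.comp tendsto_neg_atTop_atBot).neg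
    have h3 : IntegrableOn (fun x => g' (-x)) (Ioi (0:ℝ)) :=
      integrableOn_Ioi_deriv_of_nonneg' (g' := fun x => g' (-x)) (fun x _ => hd x)
        (fun x _ => hpos _) hl
    have A : MeasurableEmbedding fun x : ℝ => -x :=
      (Homeomorph.neg ℝ).isClosedEmbedding.measurableEmbedding
    have := (MeasurePreserving.integrableOn_comp_preimage
      (Measure.measurePreserving_neg (volume : Measure ℝ)) A (f := g') (s := Iic (0:ℝ))).1
    have hpre : (fun x : ℝ => -x) ⁻¹' (Iic (0:ℝ)) = Ici (0:ℝ) := by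
      ext x; simp
    rw [hpre] at this
    exact this ((integrableOn_Ici_iff_integrableOn_Ioi (by simp)).2 h3)
  have : IntegrableOn g' (Iic 0 ∪ Ioi 0) := h1.union h2
  rwa [Iic_union_Ioi, integrableOn_univ] at this

noncomputable def th (x : ℝ) : ℝ := Real.sinh x / Real.cosh x

lemma th_hasDerivAt (x : ℝ) : HasDerivAt th ((Real.cosh x ^ 2)⁻¹) x := by
  have h := (Real.hasDerivAt_sinh x).div (Real.hasDerivAt_cosh x) (Real.cosh_pos x).ne'
  have h2 : Real.cosh x * Real.cosh x - Real.sinh x * Real.sinh x = 1 := by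
    nlinarith [Real.cosh_sq_sub_sinh_sq x]
  rw [h2, one_div] at h
  exact h

lemma one_sub_th_sq (x : ℝ) : 1 - th x ^ 2 = (Real.cosh x ^ 2)⁻¹ := by
  have := Real.cosh_sq_sub_sinh_sq x
  have hc := Real.cosh_pos x
  unfold th
  field_simp
  linarith

lemma th_eq (x : ℝ) : th x = (1 - Real.exp (-2*x)) / (1 + Real.exp (-2*x)) := by
  unfold th
  rw [Real.sinh_eq, Real.cosh_eq]
  have h1 : Real.exp x * Real.exp (-x) = 1 := by
    rw [← Real.exp_add]; simp
  have h2 : Real.exp (-2*x) = Real.exp (-x) * Real.exp (-x) := by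
    rw [← Real.exp_add]; ring_nf
  have h3 : (0:ℝ) < Real.exp x + Real.exp (-x) := by positivity
  have h4 : (0:ℝ) < 1 + Real.exp (-2*x) := by positivity
  rw [div_eq_div_iff (by positivity) h4.ne']
  linear_combination (Real.exp x)*h2 + (Real.exp (-x))*h1

lemma th_tendsto_atTop : Tendsto th atTop (nhds 1) := by
  have h : Tendsto (fun x : ℝ => Real.exp (-2*x)) atTop (nhds 0) := by
    apply Real.tendsto_exp_atBot.comp
    exact (tendsto_const_mul_atBot_of_neg (by norm_num)).2 tendsto_id
  have : Tendsto (fun x : ℝ => (1 - Real.exp (-2*x)) / (1 + Real.exp (-2*x)))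
      atTop (nhds ((1-0)/(1+0))) := by
    apply Tendsto.div ((tendsto_const_nhds).sub h) ((tendsto_const_nhds).add h)
    norm_num
  simp only [sub_zero, add_zero, div_one] at this
  exact this.congr (fun x => (th_eq x).symm)

lemma th_neg (x : ℝ) : th (-x) = - th x := by
  unfold th; rw [Real.sinh_neg, Real.cosh_neg, neg_div]

lemma th_tendsto_atBot : Tendsto th atBot (nhds (-1)) := by
  have : Tendsto (fun x => - th (-x)) atBot (nhds (-1)) :=
    ((th_tendsto_atTop.comp tendsto_neg_atBot_atTop)).neg
  exact this.congr (fun x => by rw [th_neg, neg_neg])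

lemma th_sq_lt_one (x : ℝ) : th x ^ 2 ≤ 1 := by
  have := one_sub_th_sq x
  have : (0:ℝ) < (Real.cosh x ^ 2)⁻¹ := by positivity
  nlinarith [one_sub_th_sq x]

section scaled
variable {b : ℝ}

lemma hasDerivAt_th_scaled (hb : 0 < b) (x : ℝ) :
    HasDerivAt (fun y => th (b*y)) (b * (Real.cosh (b*x) ^ 2)⁻¹) x := by
  have h := (th_hasDerivAt (b*x)).comp x ((hasDerivAt_id x).const_mul b)
  exact h.congr_deriv (by ring)

lemma tendsto_th_scaled_top (hb : 0 < b) :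
    Tendsto (fun y => th (b*y)) atTop (nhds 1) :=
  th_tendsto_atTop.comp (Tendsto.const_mul_atTop hb tendsto_id)

lemma tendsto_th_scaled_bot (hb : 0 < b) :
    Tendsto (fun y => th (b*y)) atBot (nhds (-1)) :=
  th_tendsto_atBot.comp (Tendsto.const_mul_atBot hb tendsto_id)

lemma sech_sq_integral (hb : 0 < b) :
    Integrable (fun x => (Real.cosh (b*x) ^ 2)⁻¹) ∧
      ∫ x, (Real.cosh (b*x) ^ 2)⁻¹ = 2/b := by
  have hd : ∀ x, HasDerivAt (fun y => b⁻¹ * th (b*y)) ((Real.cosh (b*x) ^ 2)⁻¹) x := by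
    intro x
    have := (hasDerivAt_th_scaled hb x).const_mul b⁻¹
    exact this.congr_deriv (by rw [← mul_assoc, inv_mul_cancel₀ hb.ne', one_mul])
  have hpos : ∀ x : ℝ, (0:ℝ) ≤ (Real.cosh (b*x) ^ 2)⁻¹ := fun x => by positivity
  have htop : Tendsto (fun y => b⁻¹ * th (b*y)) atTop (nhds (b⁻¹ * 1)) :=
    (tendsto_th_scaled_top hb).const_mul b⁻¹
  have hbot : Tendsto (fun y => b⁻¹ * th (b*y)) atBot (nhds (b⁻¹ * (-1))) :=
    (tendsto_th_scaled_bot hb).const_mul b⁻¹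
  have hint := integrable_line_of_nonneg hd hpos hbot htop
  refine ⟨hint, ?_⟩
  rw [ftc_line hd hint hbot htop]
  field_simp; ring

lemma th_sq_sech_sq_integral (hb : 0 < b) :
    Integrable (fun x => th (b*x) ^ 2 * (Real.cosh (b*x) ^ 2)⁻¹) ∧
      ∫ x, th (b*x) ^ 2 * (Real.cosh (b*x) ^ 2)⁻¹ = 2/(3*b) := by
  have hd : ∀ x, HasDerivAt (fun y => (3*b)⁻¹ * th (b*y) ^ 3)
      (th (b*x) ^ 2 * (Real.cosh (b*x) ^ 2)⁻¹) x := by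
    intro x
    have h1 := ((hasDerivAt_th_scaled hb x).pow 3).const_mul (3*b)⁻¹
    have : (Real.cosh (b*x)) ≠ 0 := (Real.cosh_pos _).ne'
    exact h1.congr_deriv (by norm_num; field_simp)
  have hpos : ∀ x : ℝ, (0:ℝ) ≤ th (b*x) ^ 2 * (Real.cosh (b*x) ^ 2)⁻¹ := fun x => by positivity
  have htop : Tendsto (fun y => (3*b)⁻¹ * th (b*y) ^ 3) atTop (nhds ((3*b)⁻¹ * 1 ^ 3)) :=
    (((tendsto_th_scaled_top hb).pow 3)).const_mul (3*b)⁻¹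
  have hbot : Tendsto (fun y => (3*b)⁻¹ * th (b*y) ^ 3) atBot (nhds ((3*b)⁻¹ * (-1) ^ 3)) :=
    (((tendsto_th_scaled_bot hb).pow 3)).const_mul (3*b)⁻¹
  have hint := integrable_line_of_nonneg hd hpos hbot htop
  refine ⟨hint, ?_⟩
  rw [ftc_line hd hint hbot htop]
  have : (3:ℝ)*b ≠ 0 := by positivity
  field_simp; ring

end scaled

lemma minimizer_mem (α : ℝ) (hα : 0 < α) (q : ℕ) (hq : 1 ≤ q) :
    ∃ φ : ℝ → ℝ, Differentiable ℝ φ ∧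
        MemLp φ 2 (volume : Measure ℝ) ∧
        MemLp (deriv φ) 2 (volume : Measure ℝ) ∧
        (∫ x : ℝ, (φ x) ^ 2) = 1 ∧
        (- α ^ 2 * (q : ℝ) ^ 3 / 12 : ℝ)
          = ∫ x : ℝ, ((q : ℝ) * (deriv φ x) ^ 2 - α * (q : ℝ) ^ 2 * (φ x) ^ 4) := by
  have hq' : (0:ℝ) < q := by exact_mod_cast Nat.lt_of_lt_of_le Nat.zero_lt_one hq
  set b : ℝ := α * q / 2 with hbdef
  have hb : 0 < b := by positivity
  set φ : ℝ → ℝ := fun x => Real.sqrt (b/2) * (Real.cosh (b*x))⁻¹ with hφdef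
  set d : ℝ → ℝ := fun x => Real.sqrt (b/2) * (-(Real.sinh (b*x) * b) / Real.cosh (b*x) ^ 2)
    with hddef
  have hcoshne : ∀ x : ℝ, Real.cosh (b*x) ≠ 0 := fun x => (Real.cosh_pos _).ne'
  have hder : ∀ x, HasDerivAt φ (d x) x := by
    intro x
    have h0 : HasDerivAt (fun y : ℝ => b*y) b x := by
      simpa using (hasDerivAt_id x).const_mul b
    have h1 : HasDerivAt (fun y => Real.cosh (b*y)) (Real.sinh (b*x) * b) x :=
      (Real.hasDerivAt_cosh (b*x)).comp x h0
    exact (h1.inv (hcoshne x)).const_mul _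
  have hderiv_eq : deriv φ = d := funext fun x => (hder x).deriv
  have hdiff : Differentiable ℝ φ := fun x => (hder x).differentiableAt
  have hsqrt : Real.sqrt (b/2) ^ 2 = b/2 := Real.sq_sqrt (by positivity)
  have hsq : ∀ x, φ x ^ 2 = (b/2) * (Real.cosh (b*x) ^ 2)⁻¹ := by
    intro x
    simp only [hφdef, mul_pow, hsqrt, inv_pow]
  have hq4 : ∀ x, φ x ^ 4 = (b^2/4) *
      ((Real.cosh (b*x) ^ 2)⁻¹ - th (b*x) ^ 2 * (Real.cosh (b*x) ^ 2)⁻¹) := by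
    intro x
    have h1 : φ x ^ 4 = (φ x ^ 2) ^ 2 := by ring
    rw [h1, hsq x]
    have h2 : (1 - th (b*x) ^ 2) = (Real.cosh (b*x) ^ 2)⁻¹ := one_sub_th_sq (b*x)
    have h3 : (Real.cosh (b*x) ^ 2)⁻¹ - th (b*x) ^ 2 * (Real.cosh (b*x) ^ 2)⁻¹
        = (1 - th (b*x) ^ 2) * (Real.cosh (b*x) ^ 2)⁻¹ := by ring
    rw [h3, h2]; ring
  have hd2 : ∀ x, d x ^ 2 = (b^3/2) * (th (b*x) ^ 2 * (Real.cosh (b*x) ^ 2)⁻¹) := by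
    intro x
    have hc := hcoshne x
    simp only [hddef, th]
    rw [mul_pow, hsqrt, div_pow]
    rw [div_pow, div_mul_eq_mul_div, mul_div_assoc]
    field_simp
    ring
  obtain ⟨hI1, hV1⟩ := sech_sq_integral hb
  obtain ⟨hI3, hV3⟩ := th_sq_sech_sq_integral hb
  have hcontφ : Continuous φ := by
    apply continuous_const.mul
    exact (Real.continuous_cosh.comp (continuous_const.mul continuous_id)).inv₀ hcoshne
  have hcontd : Continuous d := by
    apply continuous_const.mul
    apply Continuous.div
    · exact ((Real.continuous_sinh.comp (continuous_const.mul continuous_id)).mul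
        continuous_const).neg
    · exact (Real.continuous_cosh.comp (continuous_const.mul continuous_id)).pow 2
    · intro x; exact pow_ne_zero 2 (hcoshne x)
  have hIφ2 : Integrable (fun x => φ x ^ 2) := by
    have : (fun x => φ x ^ 2) = fun x => (b/2) * (Real.cosh (b*x) ^ 2)⁻¹ := funext hsq
    rw [this]; exact hI1.const_mul _
  have hId2 : Integrable (fun x => d x ^ 2) := by
    have : (fun x => d x ^ 2) = fun x => (b^3/2) * (th (b*x) ^ 2 * (Real.cosh (b*x) ^ 2)⁻¹) :=
      funext hd2
    rw [this]; exact hI3.const_mul _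
  have hIφ4 : Integrable (fun x => φ x ^ 4) := by
    have : (fun x => φ x ^ 4) = fun x => (b^2/4) *
        ((Real.cosh (b*x) ^ 2)⁻¹ - th (b*x) ^ 2 * (Real.cosh (b*x) ^ 2)⁻¹) := funext hq4
    rw [this]; exact (hI1.sub hI3).const_mul _
  have hmem1 : MemLp φ 2 (volume : Measure ℝ) :=
    (memLp_two_iff_integrable_sq hcontφ.aestronglyMeasurable).2 hIφ2
  have hmem2 : MemLp (deriv φ) 2 (volume : Measure ℝ) := by
    rw [hderiv_eq]
    exact (memLp_two_iff_integrable_sq hcontd.aestronglyMeasurable).2 hId2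
  have hnorm : (∫ x : ℝ, (φ x) ^ 2) = 1 := by
    have : (fun x => φ x ^ 2) = fun x => (b/2) * (Real.cosh (b*x) ^ 2)⁻¹ := funext hsq
    rw [this, integral_const_mul, hV1]
    field_simp
  have hintφ4 : (∫ x : ℝ, (φ x) ^ 4) = b/3 := by
    have : (fun x => φ x ^ 4) = fun x => (b^2/4) *
        ((Real.cosh (b*x) ^ 2)⁻¹ - th (b*x) ^ 2 * (Real.cosh (b*x) ^ 2)⁻¹) := funext hq4
    rw [this, integral_const_mul, integral_sub hI1 hI3, hV1, hV3]
    field_simp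
    ring
  have hintd2 : (∫ x : ℝ, d x ^ 2) = b^2/3 := by
    have : (fun x => d x ^ 2) = fun x => (b^3/2) * (th (b*x) ^ 2 * (Real.cosh (b*x) ^ 2)⁻¹) :=
      funext hd2
    rw [this, integral_const_mul, hV3]
    field_simp
  refine ⟨φ, hdiff, hmem1, hmem2, hnorm, ?_⟩
  rw [hderiv_eq]
  rw [integral_sub ((hId2.const_mul _)) ((hIφ4.const_mul _))]
  rw [integral_const_mul, integral_const_mul, hintd2, hintφ4, hbdef]
  field_simp
  ring

lemma pekar_lower (α : ℝ) (hα : 0 < α) (q : ℕ) (hq : 1 ≤ q) (φ : ℝ → ℝ)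
    (hdiff : Differentiable ℝ φ) (hm1 : MemLp φ 2 (volume : Measure ℝ))
    (hm2 : MemLp (deriv φ) 2 (volume : Measure ℝ))
    (hnorm : (∫ x : ℝ, (φ x) ^ 2) = 1) :
    - α ^ 2 * (q : ℝ) ^ 3 / 12
      ≤ ∫ x : ℝ, ((q : ℝ) * (deriv φ x) ^ 2 - α * (q : ℝ) ^ 2 * (φ x) ^ 4) := by
  have hq' : (0:ℝ) < q := by exact_mod_cast Nat.lt_of_lt_of_le Nat.zero_lt_one hq
  have hcontφ : Continuous φ := hdiff.continuous
  have hsq : Integrable (fun x => φ x ^ 2) :=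
    (memLp_two_iff_integrable_sq hm1.aestronglyMeasurable).mp hm1
  have hdsq : Integrable (fun x => deriv φ x ^ 2) :=
    (memLp_two_iff_integrable_sq hm2.aestronglyMeasurable).mp hm2
  have hmulmeas : AEStronglyMeasurable (fun x => φ x * deriv φ x) (volume : Measure ℝ) :=
    hm1.aestronglyMeasurable.mul hm2.aestronglyMeasurable
  have hmul : Integrable (fun x => φ x * deriv φ x) := by
    refine Integrable.mono' ((hsq.add hdsq).div_const 2) hmulmeas ?_
    filter_upwards with x
    have := sq_nonneg (φ x - deriv φ x)
    have := sq_nonneg (φ x + deriv φ x)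
    simp only [Pi.add_apply]
    rw [Real.norm_eq_abs, abs_le]
    constructor <;> nlinarith
  -- derivative of φ²
  have hGder : ∀ x, HasDerivAt (fun y => φ y ^ 2) (2 * (φ x * deriv φ x)) x := by
    intro x
    have h := ((hdiff x).hasDerivAt).pow 2
    exact h.congr_deriv (by norm_num; ring)
  have hg'int : Integrable (fun x => 2 * (φ x * deriv φ x)) := hmul.const_mul 2
  -- φ² tends to zero at both ends
  have htop0 : Tendsto (fun y => φ y ^ 2) atTop (nhds 0) := by
    refine tendsto_zero_of_hasDerivAt_of_integrableOn_Ioi (a := 0)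
      (fun x _ => hGder x) hg'int.integrableOn hsq.integrableOn
  have hbot0 : Tendsto (fun y => φ y ^ 2) atBot (nhds 0) := by
    refine tendsto_zero_of_hasDerivAt_of_integrableOn_Iic (a := 0)
      (fun x _ => hGder x) hg'int.integrableOn hsq.integrableOn
  -- φ² is bounded
  obtain ⟨C, hC⟩ : ∃ C : ℝ, ∀ x, φ x ^ 2 ≤ C := by
    refine ⟨∫ t : ℝ, |2 * (φ t * deriv φ t)|, fun x => ?_⟩
    have hftc : ∫ t in Iic x, 2 * (φ t * deriv φ t) = φ x ^ 2 - 0 :=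
      integral_Iic_of_hasDerivAt_of_tendsto' (fun t _ => hGder t)
        hg'int.integrableOn hbot0
    rw [sub_zero] at hftc
    calc φ x ^ 2 = ∫ t in Iic x, 2 * (φ t * deriv φ t) := hftc.symm
      _ ≤ ∫ t in Iic x, |2 * (φ t * deriv φ t)| := by
          apply integral_mono hg'int.integrableOn hg'int.abs.integrableOn
          intro t; exact le_abs_self _
      _ ≤ ∫ t : ℝ, |2 * (φ t * deriv φ t)| := by
          apply setIntegral_le_integral hg'int.abs
          filter_upwards with t using abs_nonneg _
  have hIφ4 : Integrable (fun x => φ x ^ 4) := by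
    refine Integrable.mono' (hsq.const_mul C) ((hcontφ.pow 4).aestronglyMeasurable) ?_
    filter_upwards with x
    rw [Real.norm_eq_abs, abs_of_nonneg (by positivity)]
    calc φ x ^ 4 = φ x ^ 2 * φ x ^ 2 := by ring
      _ ≤ C * φ x ^ 2 := by nlinarith [sq_nonneg (φ x), hC x]
  -- the cumulative mass function H
  set A : ℝ := ∫ t in Iic (0:ℝ), φ t ^ 2 with hAdef
  set H : ℝ → ℝ := fun x => A + ∫ t in (0:ℝ)..x, φ t ^ 2 with hHdef
  have hcontsq : Continuous (fun t => φ t ^ 2) := hcontφ.pow 2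
  have hHder : ∀ x, HasDerivAt H (φ x ^ 2) x := by
    intro x
    have h := intervalIntegral.integral_hasDerivAt_right
      (hcontsq.intervalIntegrable 0 x) (hcontsq.stronglyMeasurableAtFilter _ _)
      hcontsq.continuousAt
    exact h.const_add A
  have hsum : A + (∫ t in Ioi (0:ℝ), φ t ^ 2) = 1 := by
    rw [hAdef, intervalIntegral.integral_Iic_add_Ioi hsq.integrableOn hsq.integrableOn, hnorm]
  have hHtop : Tendsto H atTop (nhds 1) := by
    have h2 : Tendsto (fun x => ∫ t in (0:ℝ)..x, φ t ^ 2) atTop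
        (nhds (∫ t in Ioi (0:ℝ), φ t ^ 2)) :=
      intervalIntegral_tendsto_integral_Ioi 0 hsq.integrableOn tendsto_id
    have := (tendsto_const_nhds (x := A)).add h2
    rwa [hsum] at this
  have hHbot : Tendsto H atBot (nhds 0) := by
    have h3 : Tendsto (fun x => ∫ t in x..(0:ℝ), φ t ^ 2) atBot (nhds A) :=
      intervalIntegral_tendsto_integral_Iic 0 hsq.integrableOn tendsto_id
    have : Tendsto (fun x => A - ∫ t in x..(0:ℝ), φ t ^ 2) atBot (nhds (A - A)) :=
      (tendsto_const_nhds (x := A)).sub h3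
    rw [sub_self] at this
    refine this.congr fun x => ?_
    rw [hHdef]
    simp [intervalIntegral.integral_symm x 0]
    ring
  have hHmono : Monotone H := by
    have hdH : ∀ x, 0 ≤ φ x ^ 2 := fun x => sq_nonneg _
    apply monotone_of_deriv_nonneg (fun x => (hHder x).differentiableAt)
    intro x
    rw [(hHder x).deriv]
    exact sq_nonneg _
  have hH0 : ∀ x, 0 ≤ H x := fun x => hHmono.le_of_tendsto hHbot x
  have hH1 : ∀ x, H x ≤ 1 := fun x => hHmono.ge_of_tendsto hHtop x
  have hcontH : Continuous H := by
    have : Differentiable ℝ H := fun x => (hHder x).differentiableAt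
    exact this.continuous
  -- integrability of the cross terms
  have habs2H : ∀ x, |1 - 2 * H x| ≤ 1 := by
    intro x
    rw [abs_le]; constructor <;> [linarith [hH1 x]; linarith [hH0 x]]
  have hI_a : Integrable (fun x => φ x * deriv φ x * (1 - 2 * H x)) := by
    refine Integrable.mono' hmul.abs
      (hmulmeas.mul ((continuous_const.sub (continuous_const.mul hcontH)).aestronglyMeasurable))
      ?_
    filter_upwards with x
    rw [Real.norm_eq_abs, abs_mul]
    calc |φ x * deriv φ x| * |1 - 2 * H x| ≤ |φ x * deriv φ x| * 1 :=
          mul_le_mul_of_nonneg_left (habs2H x) (abs_nonneg _)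
      _ = |φ x * deriv φ x| := mul_one _
  have hI_b : Integrable (fun x => (1 - 2 * H x) ^ 2 * φ x ^ 2) := by
    refine Integrable.mono' hsq
      ((((continuous_const.sub (continuous_const.mul hcontH)).pow 2).mul hcontsq).aestronglyMeasurable)
      ?_
    filter_upwards with x
    rw [Real.norm_eq_abs, abs_of_nonneg (by positivity)]
    have h1 : (1 - 2 * H x) ^ 2 ≤ 1 := by
      have := habs2H x
      nlinarith [abs_nonneg (1 - 2*H x), sq_abs (1 - 2*H x)]
    nlinarith [sq_nonneg (φ x)]
  -- FTC identity (i): ∫ φ φ' (1-2H) = ∫ φ⁴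
  have hcross : (∫ x : ℝ, φ x * deriv φ x * (1 - 2 * H x)) = ∫ x : ℝ, φ x ^ 4 := by
    have hPder : ∀ x, HasDerivAt (fun y => φ y ^ 2 * (1 - 2 * H y) / 2)
        (φ x * deriv φ x * (1 - 2 * H x) - φ x ^ 4) x := by
      intro x
      have h1 := hGder x
      have h2 : HasDerivAt (fun y => 1 - 2 * H y) (-(2 * (φ x ^ 2))) x := by
        simpa using ((hHder x).const_mul 2).const_sub 1
      have h3 := (h1.mul h2).div_const 2
      exact h3.congr_deriv (by ring)
    have hPtop : Tendsto (fun y => φ y ^ 2 * (1 - 2 * H y) / 2) atTop (nhds 0) := by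
      have := (htop0.mul ((tendsto_const_nhds (x := (1:ℝ))).sub (hHtop.const_mul 2))).div_const 2
      simpa using this
    have hPbot : Tendsto (fun y => φ y ^ 2 * (1 - 2 * H y) / 2) atBot (nhds 0) := by
      have := (hbot0.mul ((tendsto_const_nhds (x := (1:ℝ))).sub (hHbot.const_mul 2))).div_const 2
      simpa using this
    have hint : Integrable (fun x => φ x * deriv φ x * (1 - 2 * H x) - φ x ^ 4) :=
      hI_a.sub hIφ4
    have h0 := ftc_line hPder hint hPbot hPtop
    rw [sub_zero] at h0
    have := integral_sub hI_a hIφ4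
    rw [this] at h0
    linarith
  -- FTC identity (ii): ∫ (1-2H)² φ² = 1/3
  have hthird : (∫ x : ℝ, (1 - 2 * H x) ^ 2 * φ x ^ 2) = 1/3 := by
    have hQder : ∀ x, HasDerivAt (fun y => -(1 - 2 * H y) ^ 3 / 6)
        ((1 - 2 * H x) ^ 2 * φ x ^ 2) x := by
      intro x
      have h2 : HasDerivAt (fun y => 1 - 2 * H y) (-(2 * (φ x ^ 2))) x := by
        simpa using ((hHder x).const_mul 2).const_sub 1
      have h3 := ((h2.pow 3).neg).div_const 6
      exact h3.congr_deriv (by ring)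
    have hQtop : Tendsto (fun y => -(1 - 2 * H y) ^ 3 / 6) atTop (nhds (1/6)) := by
      have h := (((tendsto_const_nhds (x := (1:ℝ))).sub (hHtop.const_mul 2)).pow 3).neg.div_const 6
      norm_num at h
      convert h using 2
    have hQbot : Tendsto (fun y => -(1 - 2 * H y) ^ 3 / 6) atBot (nhds (-(1/6))) := by
      have h := (((tendsto_const_nhds (x := (1:ℝ))).sub (hHbot.const_mul 2)).pow 3).neg.div_const 6
      norm_num at h
      convert h using 2
    have h0 := ftc_line hQder hI_b hQbot hQtop
    rw [h0]; norm_num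
  -- expansion of the square
  set c : ℝ := α * q / 2 with hcdef
  have hc : 0 < c := by positivity
  have hDsq : ∀ x, (deriv φ x - c * (1 - 2 * H x) * φ x) ^ 2
      = deriv φ x ^ 2 - (2 * c) * (φ x * deriv φ x * (1 - 2 * H x))
        + c ^ 2 * ((1 - 2 * H x) ^ 2 * φ x ^ 2) := by
    intro x; ring
  have hIDsq : Integrable (fun x => (deriv φ x - c * (1 - 2 * H x) * φ x) ^ 2) := by
    have : (fun x => (deriv φ x - c * (1 - 2 * H x) * φ x) ^ 2)
        = fun x => deriv φ x ^ 2 - (2 * c) * (φ x * deriv φ x * (1 - 2 * H x))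
          + c ^ 2 * ((1 - 2 * H x) ^ 2 * φ x ^ 2) := funext hDsq
    rw [this]
    exact (hdsq.sub (hI_a.const_mul _)).add (hI_b.const_mul _)
  have hDnn : (0:ℝ) ≤ ∫ x : ℝ, (deriv φ x - c * (1 - 2 * H x) * φ x) ^ 2 :=
    integral_nonneg fun x => sq_nonneg _
  have hexp : (∫ x : ℝ, (deriv φ x - c * (1 - 2 * H x) * φ x) ^ 2)
      = (∫ x : ℝ, deriv φ x ^ 2) - (2 * c) * (∫ x : ℝ, φ x ^ 4) + c ^ 2 / 3 := by
    have h1 : (fun x => (deriv φ x - c * (1 - 2 * H x) * φ x) ^ 2)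
        = fun x => deriv φ x ^ 2 - (2 * c) * (φ x * deriv φ x * (1 - 2 * H x))
          + c ^ 2 * ((1 - 2 * H x) ^ 2 * φ x ^ 2) := funext hDsq
    have hint1 : Integrable (fun x => deriv φ x ^ 2
        - (2 * c) * (φ x * deriv φ x * (1 - 2 * H x))) := hdsq.sub (hI_a.const_mul _)
    have hint2 : Integrable (fun x => c ^ 2 * ((1 - 2 * H x) ^ 2 * φ x ^ 2)) :=
      hI_b.const_mul _
    have hint3 : Integrable (fun x => (2 * c) * (φ x * deriv φ x * (1 - 2 * H x))) :=
      hI_a.const_mul _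
    rw [h1, integral_add hint1 hint2, integral_sub hdsq hint3,
      integral_const_mul, integral_const_mul, hcross, hthird]
    ring
  have hkey : (2 * c) * (∫ x : ℝ, φ x ^ 4) ≤ (∫ x : ℝ, deriv φ x ^ 2) + c ^ 2 / 3 := by
    nlinarith [hDnn, hexp]
  -- conclusion
  rw [integral_sub (hdsq.const_mul _) (hIφ4.const_mul _), integral_const_mul, integral_const_mul]
  have h5 := mul_le_mul_of_nonneg_left hkey hq'.le
  have e1 : α * (q:ℝ) ^ 2 * (∫ x : ℝ, φ x ^ 4) = (q:ℝ) * (2 * c * ∫ x : ℝ, φ x ^ 4) := by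
    rw [hcdef]; ring
  have e3 : (q:ℝ) * ((∫ x : ℝ, deriv φ x ^ 2) + c ^ 2 / 3)
      = (q:ℝ) * (∫ x : ℝ, deriv φ x ^ 2) + α ^ 2 * (q:ℝ) ^ 3 / 12 := by
    rw [hcdef]; ring
  linarith [h5, e1, e3]

/-- The one-dimensional Pekar functional for a `q`-on:
the infimum of `∫ (q|φ'|² − αq²|φ|⁴)` over real-valued `φ ∈ H¹(ℝ)` with
`‖φ‖_{L²} = 1` equals `−α²q³/12`. -/
theorem qon_pekar_infimum (α : ℝ) (hα : 0 < α) (q : ℕ) (hq : 1 ≤ q) :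
    sInf { E : ℝ | ∃ φ : ℝ → ℝ, Differentiable ℝ φ ∧
        MemLp φ 2 (volume : Measure ℝ) ∧
        MemLp (deriv φ) 2 (volume : Measure ℝ) ∧
        (∫ x : ℝ, (φ x) ^ 2) = 1 ∧
        E = ∫ x : ℝ, ((q : ℝ) * (deriv φ x) ^ 2 - α * (q : ℝ) ^ 2 * (φ x) ^ 4) }
      = - α ^ 2 * (q : ℝ) ^ 3 / 12 := by
  have hmem : (- α ^ 2 * (q : ℝ) ^ 3 / 12) ∈ { E : ℝ | ∃ φ : ℝ → ℝ, Differentiable ℝ φ ∧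
      MemLp φ 2 (volume : Measure ℝ) ∧
      MemLp (deriv φ) 2 (volume : Measure ℝ) ∧
      (∫ x : ℝ, (φ x) ^ 2) = 1 ∧
      E = ∫ x : ℝ, ((q : ℝ) * (deriv φ x) ^ 2 - α * (q : ℝ) ^ 2 * (φ x) ^ 4) } :=
    minimizer_mem α hα q hq
  have hlb : ∀ E ∈ { E : ℝ | ∃ φ : ℝ → ℝ, Differentiable ℝ φ ∧
      MemLp φ 2 (volume : Measure ℝ) ∧
      MemLp (deriv φ) 2 (volume : Measure ℝ) ∧
      (∫ x : ℝ, (φ x) ^ 2) = 1 ∧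
      E = ∫ x : ℝ, ((q : ℝ) * (deriv φ x) ^ 2 - α * (q : ℝ) ^ 2 * (φ x) ^ 4) },
      - α ^ 2 * (q : ℝ) ^ 3 / 12 ≤ E := by
    rintro E ⟨φ, h1, h2, h3, h4, rfl⟩
    exact pekar_lower α hα q hq φ h1 h2 h3 h4
  exact le_antisymm (csInf_le ⟨_, hlb⟩ hmem) (le_csInf ⟨_, hmem⟩ hlb)
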